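/- For k = 1, 2 with k < 2ω, the functions e_k^± = e^{±iϑ_k} cos kx with e^{±iϑ_k} = (k ∓ i√(4ω² − k²))/(2ω) are eigenfunctions of the real-linear operator L_ε f = −i f_xx + ε(−αf + f_xx) − 2iω²(f + f̄) with eigenvalues μ_k^± = −ε(α + k²) ± k√(4ω² − k²). Note e^{±iϑ_k} has modulus 1 since k² + (4ω² − k²) = 4ω². -/

import Mathlib

lemma hasDerivAt_mul_cos (c : ℂ) (a x : ℝ) :
    HasDerivAt (fun x : ℝ => c * ((Real.cos (a * x) : ℝ) : ℂ))
      (c * (-(a * Real.sin (a * x)) : ℝ)) x := by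
  have h0 : HasDerivAt (fun x : ℝ => Real.cos (a * x)) (-(a * Real.sin (a * x))) x := by
    have h1 : HasDerivAt (fun x : ℝ => a * x) a x := by
      simpa using (hasDerivAt_id x).const_mul a
    have h2 := (Real.hasDerivAt_cos (a * x)).comp x h1
    rw [show -(a * Real.sin (a * x)) = -Real.sin (a * x) * a by ring]; exact h2
  exact h0.ofReal_comp.const_mul c

lemma hasDerivAt_mul_sin (c : ℂ) (a x : ℝ) :
    HasDerivAt (fun x : ℝ => c * ((Real.sin (a * x) : ℝ) : ℂ))
      (c * ((a * Real.cos (a * x)) : ℝ)) x := by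
  have h0 : HasDerivAt (fun x : ℝ => Real.sin (a * x)) (a * Real.cos (a * x)) x := by
    have h1 : HasDerivAt (fun x : ℝ => a * x) a x := by
      simpa using (hasDerivAt_id x).const_mul a
    have h2 := (Real.hasDerivAt_sin (a * x)).comp x h1
    rw [show a * Real.cos (a * x) = Real.cos (a * x) * a by ring]; exact h2
  exact h0.ofReal_comp.const_mul c

lemma dd_mul_cos (c : ℂ) (a : ℝ) :
    deriv (deriv (fun x : ℝ => c * ((Real.cos (a * x) : ℝ) : ℂ))) =
      fun x : ℝ => -((a : ℂ) ^ 2) * c * ((Real.cos (a * x) : ℝ) : ℂ) := by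
  have h1 : deriv (fun x : ℝ => c * ((Real.cos (a * x) : ℝ) : ℂ)) =
      fun x : ℝ => (-(c * a)) * ((Real.sin (a * x) : ℝ) : ℂ) := by
    funext x
    have := (hasDerivAt_mul_cos c a x).deriv
    rw [this]; push_cast; ring
  rw [h1]
  funext x
  have := (hasDerivAt_mul_sin (-(c * a)) a x).deriv
  rw [this]; push_cast; ring

/-- For `k = 1, 2` with `k < 2ω`, the functions
`e_k^± = e^{±iϑ_k} cos kx`, `e^{±iϑ_k} = (k ∓ i√(4ω² − k²))/(2ω)`, are eigenfunctions of
the real-linear operator `L_ε f = −i f_xx + ε(−αf + f_xx) − 2iω²(f + f̄)` with eigenvalues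
`μ_k^± = −ε(α + k²) ± k√(4ω² − k²)`; moreover `|e^{±iϑ_k}| = 1`. -/
theorem Leps_eigenfunctions (ω α ε : ℝ) (hα : 0 < α) (hε : 0 ≤ ε)
    (k : ℕ) (hk : k = 1 ∨ k = 2) (h2ω : (k : ℝ) < 2 * ω)
    (Lε : (ℝ → ℂ) → ℝ → ℂ)
    (hL : Lε = fun f x =>
      -Complex.I * deriv (deriv f) x + (ε : ℂ) * (-(α : ℂ) * f x + deriv (deriv f) x)
        - 2 * Complex.I * (ω : ℂ) ^ 2 * (f x + (starRingEnd ℂ) (f x)))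
    (cp cm : ℂ)
    (hcp : cp = ((k : ℂ) - Complex.I * (Real.sqrt (4 * ω ^ 2 - (k : ℝ) ^ 2) : ℂ)) / (2 * ω))
    (hcm : cm = ((k : ℂ) + Complex.I * (Real.sqrt (4 * ω ^ 2 - (k : ℝ) ^ 2) : ℂ)) / (2 * ω))
    (ep em : ℝ → ℂ)
    (hep : ep = fun x => cp * (Real.cos (k * x) : ℂ))
    (hem : em = fun x => cm * (Real.cos (k * x) : ℂ)) :
    ‖cp‖ = 1 ∧ ‖cm‖ = 1 ∧
    (∀ x : ℝ, Lε ep x =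
      ((-ε * (α + (k : ℝ) ^ 2) + k * Real.sqrt (4 * ω ^ 2 - (k : ℝ) ^ 2) : ℝ) : ℂ) * ep x) ∧
    (∀ x : ℝ, Lε em x =
      ((-ε * (α + (k : ℝ) ^ 2) - k * Real.sqrt (4 * ω ^ 2 - (k : ℝ) ^ 2) : ℝ) : ℂ) * em x) := by
  set s : ℝ := Real.sqrt (4 * ω ^ 2 - (k : ℝ) ^ 2) with hs
  have hkpos : (0 : ℝ) < (k : ℝ) := by
    rcases hk with h | h <;> simp [h]
  have hωpos : (0 : ℝ) < ω := by linarith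
  have hωC : (ω : ℂ) ≠ 0 := by exact_mod_cast hωpos.ne'
  have hnn : (0 : ℝ) ≤ 4 * ω ^ 2 - (k : ℝ) ^ 2 := by nlinarith
  have hs2r : s ^ 2 = 4 * ω ^ 2 - (k : ℝ) ^ 2 := Real.sq_sqrt hnn
  have hs2 : ((s : ℂ)) ^ 2 = 4 * (ω : ℂ) ^ 2 - ((k : ℕ) : ℂ) ^ 2 := by
    exact_mod_cast congrArg Complex.ofReal hs2r
  -- conjugates
  have hconj_p : (starRingEnd ℂ) cp = cm := by
    rw [hcp, hcm]
    simp [map_div₀, map_sub, map_mul, Complex.conj_I, Complex.conj_ofReal, map_ofNat]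
    try ring
  have hconj_m : (starRingEnd ℂ) cm = cp := by
    rw [hcp, hcm]
    simp [map_div₀, map_add, map_mul, Complex.conj_I, Complex.conj_ofReal, map_ofNat]
    try ring
  -- absolute values via normSq
  have habs : ∀ c : ℂ, c * (starRingEnd ℂ) c = 1 → ‖c‖ = 1 := by
    intro c hc
    have h1 : (Complex.normSq c : ℂ) = 1 := by rw [← Complex.mul_conj]; exact hc
    have h2 : Complex.normSq c = 1 := by exact_mod_cast h1
    rw [Complex.norm_def, h2, Real.sqrt_one]
  have habs_p : ‖cp‖ = 1 := by
    apply habs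
    rw [hconj_p, hcp, hcm]
    field_simp
    linear_combination hs2 - (s : ℂ)^2 * Complex.I_sq
  have habs_m : ‖cm‖ = 1 := by
    apply habs
    rw [hconj_m, hcp, hcm]
    field_simp
    linear_combination hs2 - (s : ℂ)^2 * Complex.I_sq
  refine ⟨habs_p, habs_m, ?_, ?_⟩
  · intro x
    rw [hL, hep]
    simp only
    rw [show (fun x : ℝ => cp * ((Real.cos ((k : ℝ) * x) : ℝ) : ℂ)) =
        (fun x : ℝ => cp * ((Real.cos ((k : ℝ) * x) : ℝ) : ℂ)) from rfl, dd_mul_cos cp (k : ℝ)]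
    simp only [map_mul, hconj_p, Complex.conj_ofReal]
    push_cast
    linear_combination (Complex.cos ((k:ℂ) * (x:ℂ)) * Complex.I * (k : ℂ) / (2 * ω)) * hs2
      - (Complex.cos ((k:ℂ) * (x:ℂ)) * (k : ℂ) ^ 2 * (s : ℂ) / (2 * ω)) * Complex.I_sq
      + (Complex.cos ((k:ℂ) * (x:ℂ)) * (Complex.I * (k:ℂ)^2 - (k:ℂ) * (s:ℂ) - 2 * Complex.I * (ω:ℂ)^2)) * hcp
      + (Complex.cos ((k:ℂ) * (x:ℂ)) * (-2 * Complex.I * (ω:ℂ)^2)) * hcm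
  · intro x
    rw [hL, hem]
    simp only
    rw [dd_mul_cos cm (k : ℝ)]
    simp only [map_mul, hconj_m, Complex.conj_ofReal]
    push_cast
    linear_combination (Complex.cos ((k:ℂ) * (x:ℂ)) * Complex.I * (k : ℂ) / (2 * ω)) * hs2
      + (Complex.cos ((k:ℂ) * (x:ℂ)) * (k : ℂ) ^ 2 * (s : ℂ) / (2 * ω)) * Complex.I_sq
      + (Complex.cos ((k:ℂ) * (x:ℂ)) * (Complex.I * (k:ℂ)^2 + (k:ℂ) * (s:ℂ) - 2 * Complex.I * (ω:ℂ)^2)) * hcm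
      + (Complex.cos ((k:ℂ) * (x:ℂ)) * (-2 * Complex.I * (ω:ℂ)^2)) * hcp
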